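/- Let 𝒳 be a finite alphabet, let P, Q ∈ 𝒫(𝒳) have full support, let γ > 0 satisfy C(P,Q) > γ, and let C ∈ ℝ be an arbitrary constant. Let α* > 0 be the solution of GJS(Q, P, α) = γα. For each N, let X^N be drawn i.i.d. from Q, and define α*_N as the solution of GJS(T_{X^N}, P, α) = γα if a positive solution exists, and α*_N = C otherwise. Then α*_N converges in probability to α* as N → ∞. -/

import Mathlib

open Filter

namespace SeqClass

variable {𝒳 : Type*} [Fintype 𝒳] [DecidableEq 𝒳]

/-- `P` is a probability mass function on `𝒳`. -/
def IsPMF (P : 𝒳 → ℝ) : Prop := (∀ x, 0 ≤ P x) ∧ ∑ x, P x = 1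

/-- `P` has full support. -/
def FullSupport (P : 𝒳 → ℝ) : Prop := ∀ x, 0 < P x

/-- Kullback–Leibler divergence `D(P‖Q)`. -/
noncomputable def KL (P Q : 𝒳 → ℝ) : ℝ := ∑ x, P x * Real.log (P x / Q x)

/-- Shannon entropy `H(P)`. -/
noncomputable def shEnt (P : 𝒳 → ℝ) : ℝ := -∑ x, P x * Real.log (P x)

/-- The mixture `(α•P + Q)/(1+α)`. -/
noncomputable def mix (P Q : 𝒳 → ℝ) (α : ℝ) : 𝒳 → ℝ := fun x => (α * P x + Q x) / (1 + α)

/-- Generalized Jensen–Shannon divergence `GJS(P,Q,α) = α D(P‖P_α) + D(Q‖P_α)`. -/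
noncomputable def GJS (P Q : 𝒳 → ℝ) (α : ℝ) : ℝ := α * KL P (mix P Q α) + KL Q (mix P Q α)

/-- Chernoff information `C(P,Q)`. -/
noncomputable def chernoff (P Q : 𝒳 → ℝ) : ℝ :=
  -(⨅ η : (Set.Icc (0:ℝ) 1), Real.log (∑ x, P x ^ (η : ℝ) * Q x ^ (1 - (η : ℝ))))

/-- Empirical distribution (type) of a finite sequence. -/
noncomputable def empDist {n : ℕ} (x : Fin n → 𝒳) : 𝒳 → ℝ :=
  fun a => ((Finset.univ.filter fun i => x i = a).card : ℝ) / n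

/-- Type of the length-`n` prefix of `y`. -/
noncomputable def prefixType {m : ℕ} (y : Fin m → 𝒳) (n : ℕ) : 𝒳 → ℝ :=
  fun a => ((Finset.univ.filter fun k : Fin m => (k : ℕ) < n ∧ y k = a).card : ℝ) / n

/-- i.i.d. product probability of a finite sequence. -/
noncomputable def prodProb {n : ℕ} (P : 𝒳 → ℝ) (x : Fin n → 𝒳) : ℝ := ∏ i, P (x i)

open scoped Classical in
/-- The empirical fixed point `α*_N`: a positive solution of `GJS(V, P, α) = γ α` if one
exists, and the constant `C` otherwise. -/
noncomputable def alphaSol (P : 𝒳 → ℝ) (γ C : ℝ) (V : 𝒳 → ℝ) : ℝ :=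
  if h : ∃ α : ℝ, 0 < α ∧ GJS V P α = γ * α then h.choose else C

/-- The auxiliary function `ψ_V(t)` in the reparametrization `t = α/(1+α)`. -/
noncomputable def psi (P V : 𝒳 → ℝ) (γ t : ℝ) : ℝ :=
  (∑ x, Real.negMulLog (P x + t * (V x - P x)))
  + ((∑ x, Real.negMulLog (P x)) - (∑ x, Real.negMulLog (V x)) - γ) * t
  - (∑ x, Real.negMulLog (P x))

lemma psi_zero (P V : 𝒳 → ℝ) (γ : ℝ) : psi P V γ 0 = 0 := by simp [psi]

lemma chernoff_self (P : 𝒳 → ℝ) (hP : IsPMF P) (hsP : FullSupport P) : chernoff P P = 0 := by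
  haveI : Nonempty (Set.Icc (0:ℝ) 1) := ⟨⟨0, by norm_num⟩⟩
  unfold chernoff
  have h : ∀ η : (Set.Icc (0:ℝ) 1),
      Real.log (∑ x, P x ^ (η:ℝ) * P x ^ (1 - (η:ℝ))) = 0 := by
    intro η
    have : ∀ x : 𝒳, P x ^ (η:ℝ) * P x ^ (1 - (η:ℝ)) = P x := by
      intro x
      rw [← Real.rpow_add (hsP x)]
      norm_num
    rw [Finset.sum_congr rfl fun x _ => this x, hP.2, Real.log_one]
  rw [iInf_congr h, ciInf_const, neg_zero]

lemma gjs_sub_eq (P V : 𝒳 → ℝ) (hsP : FullSupport P) (hV : ∀ x, 0 ≤ V x) (γ : ℝ)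
    {α : ℝ} (hα : 0 < α) :
    GJS V P α - γ * α = (1 + α) * psi P V γ (α / (1 + α)) := by
  have h1α : (0:ℝ) < 1 + α := by linarith
  set t := α / (1 + α) with ht
  have htt : (1 + α) * t = α := by rw [ht]; field_simp
  have hsum : ∀ x, α * (V x * Real.log (V x / ((α * V x + P x) / (1 + α))))
      + P x * Real.log (P x / ((α * V x + P x) / (1 + α)))
      = (1 + α) * Real.negMulLog (P x + t * (V x - P x))
        - α * Real.negMulLog (V x) - Real.negMulLog (P x) := by
    intro x
    have hPx := hsP x
    have hVx := hV x
    have hMpos : 0 < (α * V x + P x) / (1 + α) := by positivity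
    have hm : P x + t * (V x - P x) = (α * V x + P x) / (1 + α) := by
      rw [ht]; field_simp; ring
    rw [hm]
    set M := (α * V x + P x) / (1 + α) with hMdef
    have hMM : (1 + α) * M = α * V x + P x := by
      rw [hMdef]; field_simp
    rcases eq_or_lt_of_le hVx with h0 | h0
    · rw [← h0]
      simp only [Real.negMulLog, mul_zero, zero_mul, neg_zero, zero_div, Real.log_zero,
        sub_zero, mul_zero, zero_mul, add_zero]
      rw [Real.log_div (ne_of_gt hPx) (ne_of_gt hMpos)]
      rw [← h0] at hMM
      linear_combination Real.log M * hMM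
    · rw [Real.log_div (ne_of_gt h0) (ne_of_gt hMpos),
        Real.log_div (ne_of_gt hPx) (ne_of_gt hMpos)]
      simp only [Real.negMulLog]
      linear_combination Real.log M * hMM
  unfold GJS KL mix psi
  rw [Finset.mul_sum, ← Finset.sum_add_distrib,
    Finset.sum_congr rfl fun x _ => hsum x]
  rw [Finset.sum_sub_distrib, Finset.sum_sub_distrib, ← Finset.mul_sum, ← Finset.mul_sum, ht]
  field_simp
  ring


lemma concaveOn_linear (a b : ℝ) : ConcaveOn ℝ (Set.Icc (0:ℝ) 1) (fun t => a * t + b) :=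
  ⟨convex_Icc _ _, fun x _ y _ p q _ _ hpq => by
    simp only [smul_eq_mul]
    exact le_of_eq (by linear_combination b * hpq)⟩

lemma comp_affine_concave {f : ℝ → ℝ} (hf : ConcaveOn ℝ (Set.Ici (0:ℝ)) f) (a b : ℝ)
    (h : ∀ t ∈ Set.Icc (0:ℝ) 1, 0 ≤ a + t * b) :
    ConcaveOn ℝ (Set.Icc (0:ℝ) 1) (fun t => f (a + t * b)) := by
  refine ⟨convex_Icc _ _, fun x hx y hy p q hp hq hpq => ?_⟩
  have h1 := hf.2 (h x hx) (h y hy) hp hq hpq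
  have h2 : a + (p • x + q • y) * b = p • (a + x * b) + q • (a + y * b) := by
    simp only [smul_eq_mul]; linear_combination (-a) * hpq
  show p • f (a + x * b) + q • f (a + y * b) ≤ f (a + (p • x + q • y) * b)
  rw [h2]; exact h1

lemma comp_affine_strictConcave {f : ℝ → ℝ} (hf : StrictConcaveOn ℝ (Set.Ici (0:ℝ)) f)
    (a b : ℝ) (hb : b ≠ 0) (h : ∀ t ∈ Set.Icc (0:ℝ) 1, 0 ≤ a + t * b) :
    StrictConcaveOn ℝ (Set.Icc (0:ℝ) 1) (fun t => f (a + t * b)) := by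
  refine ⟨convex_Icc _ _, fun x hx y hy hxy p q hp hq hpq => ?_⟩
  have hne : a + x * b ≠ a + y * b := by
    intro hc
    exact hxy (mul_right_cancel₀ hb (by linarith))
  have h1 := hf.2 (h x hx) (h y hy) hne hp hq hpq
  have h2 : a + (p • x + q • y) * b = p • (a + x * b) + q • (a + y * b) := by
    simp only [smul_eq_mul]; linear_combination (-a) * hpq
  show p • f (a + x * b) + q • f (a + y * b) < f (a + (p • x + q • y) * b)
  rw [h2]; exact h1

lemma concaveOn_finset_sum {ι : Type*} (s : Finset ι) (f : ι → ℝ → ℝ)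
    (h : ∀ i ∈ s, ConcaveOn ℝ (Set.Icc (0:ℝ) 1) (f i)) :
    ConcaveOn ℝ (Set.Icc (0:ℝ) 1) (fun t => ∑ i ∈ s, f i t) := by
  induction s using Finset.cons_induction with
  | empty => simpa using concaveOn_const (0:ℝ) (convex_Icc _ _)
  | cons i s hi ih =>
    simp only [Finset.sum_cons]
    exact (h i (Finset.mem_cons_self _ _)).add (ih fun j hj => h j (Finset.mem_cons.2 (Or.inr hj)))

lemma mix_nonneg {P V : 𝒳 → ℝ} (hsP : FullSupport P) (hV : ∀ x, 0 ≤ V x) (x : 𝒳) :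
    ∀ t ∈ Set.Icc (0:ℝ) 1, 0 ≤ P x + t * (V x - P x) := by
  intro t ht
  nlinarith [mul_nonneg (sub_nonneg.2 ht.2) (hsP x).le, mul_nonneg ht.1 (hV x)]

lemma psi_concaveOn (P V : 𝒳 → ℝ) (hsP : FullSupport P) (hV : ∀ x, 0 ≤ V x) (γ : ℝ) :
    ConcaveOn ℝ (Set.Icc (0:ℝ) 1) (psi P V γ) := by
  have h1 : ConcaveOn ℝ (Set.Icc (0:ℝ) 1)
      (fun t => ∑ x, Real.negMulLog (P x + t * (V x - P x))) :=
    concaveOn_finset_sum _ _ fun x _ =>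
      comp_affine_concave Real.concaveOn_negMulLog (P x) (V x - P x) (mix_nonneg hsP hV x)
  have h2 := concaveOn_linear
    ((∑ x, Real.negMulLog (P x)) - (∑ x, Real.negMulLog (V x)) - γ)
    (-(∑ x, Real.negMulLog (P x)))
  have h3 := h1.add h2
  have : psi P V γ = (fun t => ∑ x, Real.negMulLog (P x + t * (V x - P x))) +
      (fun t => ((∑ x, Real.negMulLog (P x)) - (∑ x, Real.negMulLog (V x)) - γ) * t +
        -(∑ x, Real.negMulLog (P x))) := by
    funext t; simp [psi]; ring
  rw [this]; exact h3

lemma psi_strictConcaveOn (P V : 𝒳 → ℝ) (hsP : FullSupport P) (hV : ∀ x, 0 ≤ V x) (γ : ℝ)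
    (x0 : 𝒳) (hx0 : P x0 ≠ V x0) :
    StrictConcaveOn ℝ (Set.Icc (0:ℝ) 1) (psi P V γ) := by
  have hstrict : StrictConcaveOn ℝ (Set.Icc (0:ℝ) 1)
      (fun t => Real.negMulLog (P x0 + t * (V x0 - P x0))) :=
    comp_affine_strictConcave Real.strictConcaveOn_negMulLog (P x0) (V x0 - P x0)
      (sub_ne_zero.2 (Ne.symm hx0)) (mix_nonneg hsP hV x0)
  have hrest : ConcaveOn ℝ (Set.Icc (0:ℝ) 1)
      (fun t => (∑ x ∈ Finset.univ.erase x0, Real.negMulLog (P x + t * (V x - P x))) +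
        (((∑ x, Real.negMulLog (P x)) - (∑ x, Real.negMulLog (V x)) - γ) * t +
          -(∑ x, Real.negMulLog (P x)))) := by
    refine ConcaveOn.add ?_ (concaveOn_linear _ _)
    exact concaveOn_finset_sum _ _ fun x _ =>
      comp_affine_concave Real.concaveOn_negMulLog (P x) (V x - P x) (mix_nonneg hsP hV x)
  have h3 := hstrict.add_concaveOn hrest
  have : psi P V γ = (fun t => Real.negMulLog (P x0 + t * (V x0 - P x0))) +
      (fun t => (∑ x ∈ Finset.univ.erase x0, Real.negMulLog (P x + t * (V x - P x))) +
        (((∑ x, Real.negMulLog (P x)) - (∑ x, Real.negMulLog (V x)) - γ) * t +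
          -(∑ x, Real.negMulLog (P x)))) := by
    funext t
    simp only [psi, Pi.add_apply]
    rw [← Finset.add_sum_erase _ _ (Finset.mem_univ x0)]
    ring
  rw [this]; exact h3

lemma psi_continuous_t (P V : 𝒳 → ℝ) (γ : ℝ) : Continuous (psi P V γ) := by
  unfold psi
  refine Continuous.sub (Continuous.add ?_ (by fun_prop)) continuous_const
  exact continuous_finset_sum _ fun x _ =>
    Real.continuous_negMulLog.comp (continuous_const.add (continuous_id.mul continuous_const))

lemma psi_continuous_V (P : 𝒳 → ℝ) (γ t : ℝ) :
    Continuous (fun V : 𝒳 → ℝ => psi P V γ t) := by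
  unfold psi
  refine Continuous.sub (Continuous.add ?_ ?_) continuous_const
  · exact continuous_finset_sum _ fun x _ =>
      Real.continuous_negMulLog.comp
        (continuous_const.add (continuous_const.mul ((continuous_apply x).sub continuous_const)))
  · refine Continuous.mul (Continuous.sub (Continuous.sub continuous_const ?_) continuous_const)
      continuous_const
    exact continuous_finset_sum _ fun x _ =>
      Real.continuous_negMulLog.comp (continuous_apply x)


lemma ratio_mono {a b : ℝ} (ha : 0 ≤ a) (hb : 0 ≤ b) :
    a / (1 + a) < b / (1 + b) ↔ a < b := by
  rw [div_lt_div_iff₀ (by linarith) (by linarith)]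
  constructor <;> intro h <;> nlinarith

lemma psi_eq_zero_of_sol (P V : 𝒳 → ℝ) (hsP : FullSupport P) (hV : ∀ x, 0 ≤ V x) (γ : ℝ)
    {α : ℝ} (hα : 0 < α) (heq : GJS V P α = γ * α) : psi P V γ (α / (1 + α)) = 0 := by
  have h := gjs_sub_eq P V hsP hV γ hα
  rw [heq, sub_self] at h
  have h1α : (0:ℝ) < 1 + α := by linarith
  rcases mul_eq_zero.mp h.symm with h' | h'
  · exact absurd h' (ne_of_gt h1α)
  · exact h'

lemma alphaSol_near (P Q : 𝒳 → ℝ) (hP : IsPMF P) (hQ : IsPMF Q)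
    (hsP : FullSupport P)
    (γ : ℝ) (hγ0 : 0 < γ) (hγC : γ < chernoff P Q) (C : ℝ)
    (αstar : ℝ) (hα0 : 0 < αstar) (hαeq : GJS Q P αstar = γ * αstar)
    (ε : ℝ) (hε : 0 < ε) :
    ∃ δ > 0, ∀ V : 𝒳 → ℝ, (∀ x, 0 ≤ V x) → (∀ x, |V x - Q x| < δ) →
      |alphaSol P γ C V - αstar| < ε := by
  -- P ≠ Q
  have hPQ : P ≠ Q := by
    rintro rfl
    rw [chernoff_self P hP hsP] at hγC
    linarith
  obtain ⟨x0, hx0⟩ := Function.ne_iff.mp hPQ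
  -- the fixed point in t coordinates
  have h1αs : (0:ℝ) < 1 + αstar := by linarith
  set tstar := αstar / (1 + αstar) with htstar
  have htstar0 : 0 < tstar := div_pos hα0 h1αs
  have htstar1 : tstar < 1 := (div_lt_one h1αs).2 (by linarith)
  have hψstar : psi P Q γ tstar = 0 := psi_eq_zero_of_sol P Q hsP hQ.1 γ hα0 hαeq
  -- bracketing points
  set ε' := min ε αstar with hε'def
  have hε'0 : 0 < ε' := lt_min hε hα0
  have hε'ε : ε' ≤ ε := min_le_left _ _
  have hε'α : ε' ≤ αstar := min_le_right _ _
  set α1 := αstar - ε' / 2 with hα1def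
  set α2 := αstar + ε / 2 with hα2def
  have hα1pos : 0 < α1 := by rw [hα1def]; linarith
  have hα1lt : α1 < αstar := by rw [hα1def]; linarith
  have hα2gt : αstar < α2 := by rw [hα2def]; linarith
  set t1 := α1 / (1 + α1) with ht1
  set t2 := α2 / (1 + α2) with ht2
  have ht1pos : 0 < t1 := div_pos hα1pos (by linarith)
  have ht1lt : t1 < tstar := (ratio_mono hα1pos.le hα0.le).2 hα1lt
  have ht2gt : tstar < t2 := (ratio_mono hα0.le (by linarith)).2 hα2gt
  have ht2lt : t2 < 1 := (div_lt_one (by linarith)).2 (by linarith)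
  have h0mem : (0:ℝ) ∈ Set.Icc (0:ℝ) 1 := ⟨le_refl _, zero_le_one⟩
  have htsmem : tstar ∈ Set.Icc (0:ℝ) 1 := ⟨htstar0.le, htstar1.le⟩
  have ht1mem : t1 ∈ Set.Icc (0:ℝ) 1 := ⟨ht1pos.le, by linarith⟩
  have ht2mem : t2 ∈ Set.Icc (0:ℝ) 1 := ⟨by linarith, ht2lt.le⟩
  -- strict concavity of psi for Q
  have hstrict := psi_strictConcaveOn P Q hsP hQ.1 γ x0 hx0
  -- psi Q is positive at t1
  have hψt1 : 0 < psi P Q γ t1 := by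
    have hb0 : 0 < t1 / tstar := div_pos ht1pos htstar0
    have hb1 : t1 / tstar < 1 := (div_lt_one htstar0).2 ht1lt
    have h := hstrict.2 h0mem htsmem (ne_of_lt htstar0)
      (show (0:ℝ) < 1 - t1 / tstar by linarith) hb0
      (show (1 - t1 / tstar) + t1 / tstar = 1 by ring)
    rw [psi_zero, hψstar] at h
    simp only [smul_eq_mul, mul_zero, add_zero, smul_zero, zero_add] at h
    rw [div_mul_cancel₀ _ (ne_of_gt htstar0)] at h
    linarith
  -- psi Q is negative at t2
  have hψt2 : psi P Q γ t2 < 0 := by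
    have hb0 : 0 < tstar / t2 := div_pos htstar0 (by linarith)
    have hb1 : tstar / t2 < 1 := (div_lt_one (by linarith)).2 ht2gt
    have h := hstrict.2 h0mem ht2mem (by positivity)
      (show (0:ℝ) < 1 - tstar / t2 by linarith) hb0
      (show (1 - tstar / t2) + tstar / t2 = 1 by ring)
    rw [psi_zero] at h
    simp only [smul_eq_mul, mul_zero, add_zero, smul_zero, zero_add] at h
    rw [div_mul_cancel₀ _ (ne_of_gt (lt_trans htstar0 ht2gt)), hψstar] at h
    by_contra hc
    push_neg at hc
    exact absurd h (not_lt.2 (mul_nonneg hb0.le hc))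
  -- choose δ by continuity
  obtain ⟨δ1, hδ1, hc1⟩ := Metric.continuousAt_iff.mp
    (psi_continuous_V P γ t1).continuousAt (psi P Q γ t1) hψt1
  obtain ⟨δ2, hδ2, hc2⟩ := Metric.continuousAt_iff.mp
    (psi_continuous_V P γ t2).continuousAt (-(psi P Q γ t2)) (by linarith)
  refine ⟨min δ1 δ2, lt_min hδ1 hδ2, fun V hVnn hVclose => ?_⟩
  have hdist1 : dist V Q < δ1 := by
    refine lt_of_lt_of_le ((dist_pi_lt_iff (lt_min hδ1 hδ2)).2 fun x => ?_) (min_le_left _ _)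
    rw [Real.dist_eq]; exact hVclose x
  have hdist2 : dist V Q < δ2 := by
    refine lt_of_lt_of_le ((dist_pi_lt_iff (lt_min hδ1 hδ2)).2 fun x => ?_) (min_le_right _ _)
    rw [Real.dist_eq]; exact hVclose x
  have hV1 : 0 < psi P V γ t1 := by
    have := hc1 hdist1
    rw [Real.dist_eq, abs_lt] at this
    linarith [this.1]
  have hV2 : psi P V γ t2 < 0 := by
    have := hc2 hdist2
    rw [Real.dist_eq, abs_lt] at this
    linarith [this.2]
  -- existence of a solution by IVT
  have hivt := intermediate_value_Icc' (le_of_lt (lt_trans ht1lt ht2gt))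
    (psi_continuous_t P V γ).continuousOn (a := t1) (b := t2)
  obtain ⟨t0, ht0mem, ht0⟩ := hivt ⟨hV2.le, hV1.le⟩
  have ht0pos : 0 < t0 := lt_of_lt_of_le ht1pos ht0mem.1
  have ht01 : t0 < 1 := lt_of_le_of_lt ht0mem.2 ht2lt
  have h1t0 : (0:ℝ) < 1 - t0 := by linarith
  set α0 := t0 / (1 - t0) with hα0def
  have hα0pos : 0 < α0 := div_pos ht0pos h1t0
  have hback : α0 / (1 + α0) = t0 := by
    rw [hα0def]; field_simp; ring
  have hsol0 : GJS V P α0 = γ * α0 := by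
    have h := gjs_sub_eq P V hsP hVnn γ hα0pos
    rw [hback, ht0, mul_zero] at h
    linarith
  have hex : ∃ α : ℝ, 0 < α ∧ GJS V P α = γ * α := ⟨α0, hα0pos, hsol0⟩
  -- analyze the chosen solution
  rw [alphaSol, dif_pos hex]
  obtain ⟨hαc0, hαceq⟩ := hex.choose_spec
  set αc := hex.choose with hαcdef
  have h1αc : (0:ℝ) < 1 + αc := by linarith
  set tc := αc / (1 + αc) with htc
  have htc0 : 0 < tc := div_pos hαc0 h1αc
  have htc1 : tc < 1 := (div_lt_one h1αc).2 (by linarith)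
  have htcmem : tc ∈ Set.Icc (0:ℝ) 1 := ⟨htc0.le, htc1.le⟩
  have hψc : psi P V γ tc = 0 := psi_eq_zero_of_sol P V hsP hVnn γ hαc0 hαceq
  have hconc := psi_concaveOn P V hsP hVnn γ
  -- tc > t1
  have h1c : t1 < tc := by
    by_contra hle
    push_neg at hle
    have hne : tc ≠ t1 := by
      intro h
      rw [← h, hψc] at hV1
      exact lt_irrefl 0 hV1
    have hlt : tc < t1 := lt_of_le_of_ne hle hne
    have hb0 : 0 < tc / t1 := div_pos htc0 ht1pos
    have hb1 : tc / t1 < 1 := (div_lt_one ht1pos).2 hlt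
    have h := hconc.2 h0mem ht1mem
      (show (0:ℝ) ≤ 1 - tc / t1 by linarith) hb0.le
      (show (1 - tc / t1) + tc / t1 = 1 by ring)
    rw [psi_zero] at h
    simp only [smul_eq_mul, mul_zero, add_zero, smul_zero, zero_add] at h
    rw [div_mul_cancel₀ _ (ne_of_gt ht1pos), hψc] at h
    exact absurd h (not_le.2 (mul_pos hb0 hV1))
  -- tc < t2
  have h2c : tc < t2 := by
    by_contra hle
    push_neg at hle
    have hne : t2 ≠ tc := by
      intro h
      rw [h, hψc] at hV2
      exact lt_irrefl 0 hV2
    have hlt : t2 < tc := lt_of_le_of_ne hle hne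
    have hb0 : 0 < t2 / tc := div_pos (by linarith : (0:ℝ) < t2) htc0
    have hb1 : t2 / tc < 1 := (div_lt_one htc0).2 hlt
    have h := hconc.2 h0mem htcmem
      (show (0:ℝ) ≤ 1 - t2 / tc by linarith) hb0.le
      (show (1 - t2 / tc) + t2 / tc = 1 by ring)
    rw [psi_zero] at h
    simp only [smul_eq_mul, mul_zero, add_zero, smul_zero, zero_add] at h
    rw [div_mul_cancel₀ _ (ne_of_gt htc0), hψc] at h
    rw [mul_zero] at h
    linarith
  -- convert back to α
  have hαc1 : α1 < αc := by
    have := (ratio_mono hα1pos.le hαc0.le).1 h1c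
    exact this
  have hαc2 : αc < α2 := by
    have := (ratio_mono hαc0.le (by linarith : (0:ℝ) ≤ α2)).1 h2c
    exact this
  rw [abs_lt]
  constructor
  · rw [hα1def] at hαc1; linarith
  · rw [hα2def] at hαc2; linarith


lemma sum_prod_pi {N : ℕ} (g : Fin N → 𝒳 → ℝ) :
    ∑ x : Fin N → 𝒳, ∏ k, g k (x k) = ∏ k, ∑ y, g k y := (Fintype.prod_sum g).symm

lemma variance_bound (Q : 𝒳 → ℝ) (hQ : IsPMF Q) (a : 𝒳) {N : ℕ} (hN : 0 < N) :
    ∑ x : Fin N → 𝒳, prodProb Q x * (empDist x a - Q a) ^ 2 ≤ 1 / N := by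
  have hNR : (0:ℝ) < N := by exact_mod_cast hN
  set q := Q a with hq
  set d : 𝒳 → ℝ := fun y => (if y = a then (1:ℝ) else 0) - q with hd
  -- d has mean zero and second moment ≤ 1 under Q
  have hmean : ∑ y, Q y * d y = 0 := by
    rw [hd]
    simp only [mul_sub, Finset.sum_sub_distrib, mul_ite, mul_one, mul_zero]
    rw [Finset.sum_ite_eq' Finset.univ a Q, ← Finset.sum_mul, hQ.2]
    simp [hq]
  have hqle : q ≤ 1 := by
    rw [hq, ← hQ.2]
    exact Finset.single_le_sum (fun y _ => hQ.1 y) (Finset.mem_univ a)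
  have hq0 : 0 ≤ q := hQ.1 a
  have hsq : ∀ y, d y ^ 2 ≤ 1 := by
    intro y
    rw [hd]
    by_cases h : y = a
    · simp only [if_pos h]; nlinarith
    · simp only [if_neg h]; nlinarith
  have hM2 : ∑ y, Q y * d y ^ 2 ≤ 1 := by
    calc ∑ y, Q y * d y ^ 2 ≤ ∑ y, Q y * 1 :=
          Finset.sum_le_sum fun y _ => mul_le_mul_of_nonneg_left (hsq y) (hQ.1 y)
      _ = 1 := by simp [hQ.2]
  have hM2nn : 0 ≤ ∑ y, Q y * d y ^ 2 :=
    Finset.sum_nonneg fun y _ => mul_nonneg (hQ.1 y) (sq_nonneg _)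
  -- rewrite the empirical deviation
  have hemp : ∀ x : Fin N → 𝒳, empDist x a - q = (∑ i, d (x i)) / N := by
    intro x
    unfold empDist
    have hcard : ((Finset.univ.filter fun i => x i = a).card : ℝ)
        = ∑ i, (if x i = a then (1:ℝ) else 0) := by
      rw [Finset.sum_boole]
    rw [hcard, hd]
    rw [Finset.sum_sub_distrib, Finset.sum_const, Finset.card_univ, Fintype.card_fin,
      nsmul_eq_mul, sub_div, mul_div_cancel_left₀ q (ne_of_gt hNR)]
  -- key covariance computation
  have key : ∀ i j : Fin N, (∑ x : Fin N → 𝒳, prodProb Q x * (d (x i) * d (x j)))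
      = if i = j then ∑ y, Q y * d y ^ 2 else 0 := by
    intro i j
    by_cases hij : i = j
    · subst hij
      rw [if_pos rfl]
      have hx : ∀ x : Fin N → 𝒳, prodProb Q x * (d (x i) * d (x i))
          = ∏ k, (Q (x k) * (if k = i then d (x k) ^ 2 else 1)) := by
        intro x
        rw [Finset.prod_mul_distrib, Finset.prod_ite_eq' Finset.univ i (fun k => d (x k) ^ 2)]
        simp only [Finset.mem_univ, if_true]
        unfold prodProb
        ring
      rw [Finset.sum_congr rfl fun x _ => hx x]
      rw [show (∑ x : Fin N → 𝒳, ∏ k, (Q (x k) * (if k = i then d (x k) ^ 2 else 1)))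
          = ∏ k, ∑ y, (Q y * (if k = i then d y ^ 2 else 1)) from
        sum_prod_pi (fun k y => Q y * (if k = i then d y ^ 2 else 1))]
      rw [Finset.prod_eq_single_of_mem i (Finset.mem_univ i)
        (fun k _ hk => by simp only [if_neg hk, mul_one]; exact hQ.2)]
      simp
    · rw [if_neg hij]
      have hx : ∀ x : Fin N → 𝒳, prodProb Q x * (d (x i) * d (x j))
          = ∏ k, (Q (x k) * ((if k = i then d (x k) else 1) * (if k = j then d (x k) else 1))) := by
        intro x
        rw [Finset.prod_mul_distrib, Finset.prod_mul_distrib,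
          Finset.prod_ite_eq' Finset.univ i (fun k => d (x k)),
          Finset.prod_ite_eq' Finset.univ j (fun k => d (x k))]
        simp only [Finset.mem_univ, if_true]
        unfold prodProb
        ring
      rw [Finset.sum_congr rfl fun x _ => hx x]
      rw [show (∑ x : Fin N → 𝒳, ∏ k,
            (Q (x k) * ((if k = i then d (x k) else 1) * (if k = j then d (x k) else 1))))
          = ∏ k, ∑ y, (Q y * ((if k = i then d y else 1) * (if k = j then d y else 1))) from
        sum_prod_pi (fun k y => Q y * ((if k = i then d y else 1) * (if k = j then d y else 1)))]
      refine Finset.prod_eq_zero (Finset.mem_univ i) ?_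
      simp only [if_pos rfl, if_neg hij]
      simpa [mul_one] using hmean
  -- put it together
  have hsum : ∑ x : Fin N → 𝒳, prodProb Q x * (empDist x a - q) ^ 2
      = (∑ y, Q y * d y ^ 2) * N / N ^ 2 := by
    have h1 : ∀ x : Fin N → 𝒳, prodProb Q x * (empDist x a - q) ^ 2
        = (∑ i, ∑ j, prodProb Q x * (d (x i) * d (x j))) / N ^ 2 := by
      intro x
      rw [hemp x, div_pow, sq, Finset.sum_mul_sum, Finset.sum_div, Finset.mul_sum,
        Finset.sum_div]
      refine Finset.sum_congr rfl fun i _ => ?_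
      rw [Finset.sum_div, Finset.mul_sum, Finset.sum_div]
      exact Finset.sum_congr rfl fun j _ => by ring
    rw [Finset.sum_congr rfl fun x _ => h1 x, ← Finset.sum_div]
    congr 1
    rw [Finset.sum_comm]
    rw [Finset.sum_congr rfl fun i (_ : i ∈ Finset.univ) => Finset.sum_comm.symm]
    have : ∀ i : Fin N, (∑ j : Fin N, ∑ x : Fin N → 𝒳, prodProb Q x * (d (x i) * d (x j)))
        = ∑ y, Q y * d y ^ 2 := by
      intro i
      rw [Finset.sum_congr rfl fun j _ => key i j]
      simp
    rw [Finset.sum_congr rfl fun i _ => this i, Finset.sum_const, Finset.card_univ,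
      Fintype.card_fin, nsmul_eq_mul, mul_comm]
  rw [hsum]
  rw [div_le_div_iff₀ (by positivity) hNR]
  have : (N:ℝ) ^ 2 = N * N := sq (N:ℝ) ▸ sq (N:ℝ) ▸ by ring
  nlinarith [hM2, hM2nn, hNR]


lemma markov_bound (Q : 𝒳 → ℝ) (hQ : IsPMF Q) (δ : ℝ) (hδ : 0 < δ) {N : ℕ} (hN : 0 < N) :
    ∑ x : Fin N → 𝒳, (if ∃ a, δ ≤ |empDist x a - Q a| then prodProb Q x else 0)
      ≤ (Fintype.card 𝒳 : ℝ) / δ ^ 2 / N := by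
  have hNR : (0:ℝ) < N := by exact_mod_cast hN
  have h1 : ∀ x : Fin N → 𝒳, (if ∃ a, δ ≤ |empDist x a - Q a| then prodProb Q x else 0)
      ≤ prodProb Q x * (∑ a, (empDist x a - Q a) ^ 2) / δ ^ 2 := by
    intro x
    have hpp : 0 ≤ prodProb Q x := Finset.prod_nonneg fun i _ => hQ.1 _
    by_cases hev : ∃ a, δ ≤ |empDist x a - Q a|
    · rw [if_pos hev]
      obtain ⟨a, ha⟩ := hev
      have h2 : δ ^ 2 ≤ (empDist x a - Q a) ^ 2 := by
        have := pow_le_pow_left₀ hδ.le ha 2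
        rwa [sq_abs] at this
      have h3 : δ ^ 2 ≤ ∑ a', (empDist x a' - Q a') ^ 2 :=
        h2.trans (Finset.single_le_sum (f := fun a' => (empDist x a' - Q a') ^ 2)
          (fun _ _ => sq_nonneg _) (Finset.mem_univ a))
      calc prodProb Q x = prodProb Q x * δ ^ 2 / δ ^ 2 := by field_simp
        _ ≤ prodProb Q x * (∑ a, (empDist x a - Q a) ^ 2) / δ ^ 2 := by gcongr
    · rw [if_neg hev]
      positivity
  calc ∑ x : Fin N → 𝒳, (if ∃ a, δ ≤ |empDist x a - Q a| then prodProb Q x else 0)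
      ≤ ∑ x : Fin N → 𝒳, prodProb Q x * (∑ a, (empDist x a - Q a) ^ 2) / δ ^ 2 :=
        Finset.sum_le_sum fun x _ => h1 x
    _ = (∑ a, ∑ x : Fin N → 𝒳, prodProb Q x * (empDist x a - Q a) ^ 2) / δ ^ 2 := by
        rw [← Finset.sum_div]
        congr 1
        rw [show (∑ x : Fin N → 𝒳, prodProb Q x * ∑ a, (empDist x a - Q a) ^ 2)
            = ∑ x : Fin N → 𝒳, ∑ a, prodProb Q x * (empDist x a - Q a) ^ 2 from
          Finset.sum_congr rfl fun x _ => Finset.mul_sum _ _ _]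
        exact Finset.sum_comm
    _ ≤ (∑ _a : 𝒳, 1 / (N:ℝ)) / δ ^ 2 := by
        gcongr
        exact variance_bound Q hQ _ hN
    _ = (Fintype.card 𝒳 : ℝ) / δ ^ 2 / N := by
        rw [Finset.sum_const, Finset.card_univ, nsmul_eq_mul, mul_one_div, div_div, div_div,
          mul_comm]

theorem empirical_fixed_point_converges_in_probability
    (P Q : 𝒳 → ℝ) (hP : IsPMF P) (hQ : IsPMF Q)
    (hsP : FullSupport P) (hsQ : FullSupport Q)
    (γ : ℝ) (hγ0 : 0 < γ) (hγC : γ < chernoff P Q) (C : ℝ)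
    (αstar : ℝ) (hα0 : 0 < αstar) (hαeq : GJS Q P αstar = γ * αstar) :
    ∀ ε : ℝ, 0 < ε →
      Filter.Tendsto
        (fun N : ℕ => ∑ x : Fin N → 𝒳,
          if ε ≤ |alphaSol P γ C (empDist x) - αstar| then prodProb Q x else 0)
        Filter.atTop (nhds 0) := by
  intro ε hε
  obtain ⟨δ, hδ, hδprop⟩ := alphaSol_near P Q hP hQ hsP γ hγ0 hγC C αstar hα0 hαeq ε hε
  have hnonneg : ∀ N : ℕ, 0 ≤ ∑ x : Fin N → 𝒳,
      (if ε ≤ |alphaSol P γ C (empDist x) - αstar| then prodProb Q x else 0) := by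
    intro N
    refine Finset.sum_nonneg fun x _ => ?_
    split
    · exact Finset.prod_nonneg fun i _ => hQ.1 _
    · exact le_refl 0
  refine squeeze_zero' (Filter.Eventually.of_forall hnonneg) ?_
    (tendsto_const_div_atTop_nhds_zero_nat ((Fintype.card 𝒳 : ℝ) / δ ^ 2))
  filter_upwards [Filter.eventually_gt_atTop 0] with N hN
  calc ∑ x : Fin N → 𝒳, (if ε ≤ |alphaSol P γ C (empDist x) - αstar| then prodProb Q x else 0)
      ≤ ∑ x : Fin N → 𝒳, (if ∃ a, δ ≤ |empDist x a - Q a| then prodProb Q x else 0) := by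
        refine Finset.sum_le_sum fun x _ => ?_
        by_cases hev : ε ≤ |alphaSol P γ C (empDist x) - αstar|
        · rw [if_pos hev]
          have : ∃ a, δ ≤ |empDist x a - Q a| := by
            by_contra hc
            push_neg at hc
            have hVnn : ∀ a, 0 ≤ empDist x a := by
              intro a
              unfold empDist
              positivity
            exact absurd hev (not_le.2 (hδprop (empDist x) hVnn hc))
          rw [if_pos this]
        · rw [if_neg hev]
          split
          · exact Finset.prod_nonneg fun i _ => hQ.1 _
          · exact le_refl 0
    _ ≤ (Fintype.card 𝒳 : ℝ) / δ ^ 2 / N := markov_bound Q hQ δ hδ hN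


end SeqClass
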